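/- Let G be a finite connected graph and W a parallel double trace of G such that the vertex figure of some vertex with respect to W is disconnected. Then there exists a parallel double trace W' of G such that the total number of connected components of the vertex figures of all vertices with respect to W' is strictly smaller than the corresponding total for W. -/

import Mathlib

namespace StrongTraces

open SimpleGraph Finset

/-- Cyclic successor on `Fin n`. -/
def csucc {n : ℕ} (i : Fin n) : Fin n :=
  ⟨(i.val + 1) % n, Nat.mod_lt _ (by have := i.isLt; omega)⟩

/-- Cyclic predecessor on `Fin n`. -/
def cpred {n : ℕ} (i : Fin n) : Fin n :=
  ⟨(i.val + n - 1) % n, Nat.mod_lt _ (by have := i.isLt; omega)⟩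

variable {V : Type*} [Fintype V] [DecidableEq V]

/-- A double trace of `G`: a closed walk, encoded as a cyclic sequence of `n` vertices
(read cyclically, so step `i` goes from `f i` to `f (csucc i)`), that traverses every
edge of `G` exactly twice.  (`n = 0` encodes the trivial closed walk.) -/
structure DoubleTrace (G : SimpleGraph V) where
  n : ℕ
  f : Fin n → V
  adj : ∀ i : Fin n, G.Adj (f i) (f (csucc i))
  twice : ∀ e ∈ G.edgeSet,
    (Finset.univ.filter fun i : Fin n => s(f i, f (csucc i)) = e).card = 2

variable {G : SimpleGraph V}

/-- `W` has an `N`-repetition at `v`: at every visit of `W` to `v`, the predecessor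
lies in `N` if and only if the successor lies in `N`. -/
def DoubleTrace.HasRepetition (W : DoubleTrace G) (v : V) (N : Set V) : Prop :=
  ∀ i : Fin W.n, W.f i = v → (W.f (cpred i) ∈ N ↔ W.f (csucc i) ∈ N)

/-- A strong trace: a double trace all of whose repetitions are trivial
(`N = ∅` or `N = N(v)`). -/
def DoubleTrace.IsStrong (W : DoubleTrace G) : Prop :=
  ∀ (v : V) (N : Set V), N ⊆ G.neighborSet v → W.HasRepetition v N →
    N = ∅ ∨ N = G.neighborSet v

/-- A `d`-stable trace: a double trace with no `N`-repetition with `1 ≤ |N| ≤ d`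
at any vertex. -/
def DoubleTrace.IsStable (W : DoubleTrace G) (d : ℕ) : Prop :=
  ∀ (v : V) (N : Set V), N ⊆ G.neighborSet v → 1 ≤ N.ncard → N.ncard ≤ d →
    ¬ W.HasRepetition v N

/-- The number of times `W` makes the directed step from `u` to `v`. -/
def DoubleTrace.traversalCount (W : DoubleTrace G) (u v : V) : ℕ :=
  (Finset.univ.filter fun i : Fin W.n => W.f i = u ∧ W.f (csucc i) = v).card

/-- `W` traverses every edge once in each direction. -/
def DoubleTrace.IsAntiparallel (W : DoubleTrace G) : Prop :=
  ∀ u v : V, G.Adj u v → W.traversalCount u v = 1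

/-- `W` traverses every edge twice in the same direction. -/
def DoubleTrace.IsParallel (W : DoubleTrace G) : Prop :=
  ∀ u v : V, G.Adj u v → W.traversalCount u v = 0 ∨ W.traversalCount u v = 2

/-- The adjacency relation of the vertex figure of `v` with respect to `W`:
two edges incident with `v` are related if they occur consecutively at some visit
of `W` to `v`. -/
def DoubleTrace.VertexFigureRel (W : DoubleTrace G) (v : V) :
    G.incidenceSet v → G.incidenceSet v → Prop :=
  fun e e' => ∃ i : Fin W.n, W.f i = v ∧
    ((e.1 = s(W.f (cpred i), v) ∧ e'.1 = s(v, W.f (csucc i))) ∨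
     (e'.1 = s(W.f (cpred i), v) ∧ e.1 = s(v, W.f (csucc i))))

/-- The vertex figure of `v` with respect to `W` is connected: the equivalence
relation generated by consecutiveness at visits to `v` relates any two edges
incident with `v`. -/
def DoubleTrace.VertexFigureConnected (W : DoubleTrace G) (v : V) : Prop :=
  ∀ e e' : G.incidenceSet v, Relation.EqvGen (W.VertexFigureRel v) e e'

/-- The number of connected components of the vertex figure of `v` with respect to
`W`, i.e. the number of equivalence classes of the equivalence relation generated by
consecutiveness at visits to `v`. -/
noncomputable def DoubleTrace.vertexFigureComponents (W : DoubleTrace G) (v : V) : ℕ :=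
  Nat.card (Quot (W.VertexFigureRel v))

/-- The number of edges of `H` lying in the connected component `c` of `H`. -/
noncomputable def componentEdgeCount (H : SimpleGraph V) (c : H.ConnectedComponent) : ℕ :=
  Nat.card {e : Sym2 V | e ∈ H.edgeSet ∧ ∀ x ∈ e, H.connectedComponentMk x = c}


section Aux
open Relation


/-- offset form of the re-ordering map of the spliced walk -/
def OFS (n J Q t : ℕ) : ℕ :=
  if t = 0 then 0 else if t ≤ n-1-Q then t+Q else if t ≤ n-J then t+J+Q-n else t+J-n

/-- offset form of the transition-swap permutation -/
def SIG (n J Q o : ℕ) : ℕ :=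
  if o = n-1 then J-1 else if o = J-1 then n-1 else if o = 0 then Q else if o = Q then 0 else o

section NatLemmas
variable {n J Q : ℕ} (hJ2 : 2 ≤ J) (hJQ : J ≤ Q) (hQn : Q + 2 ≤ n)
include hJ2 hJQ hQn

lemma OFS_lt {t : ℕ} (ht : t < n) : OFS n J Q t < n := by
  unfold OFS; split_ifs <;> omega

lemma OFS_inj {t t' : ℕ} (ht : t < n) (ht' : t' < n) (h : OFS n J Q t = OFS n J Q t') :
    t = t' := by
  unfold OFS at h; split_ifs at h <;> omega

lemma SIG_lt {o : ℕ} (ho : o < n) : SIG n J Q o < n := by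
  unfold SIG; split_ifs <;> omega

lemma SIG_SIG {o : ℕ} (ho : o < n) : SIG n J Q (SIG n J Q o) = o := by
  unfold SIG; split_ifs <;> omega

omit hJ2 hJQ hQn in
lemma SIG_fix {o : ℕ} (h1 : o ≠ n-1) (h2 : o ≠ J-1) (h3 : o ≠ 0) (h4 : o ≠ Q) :
    SIG n J Q o = o := by
  unfold SIG; rw [if_neg h1, if_neg h2, if_neg h3, if_neg h4]

omit hJ2 hJQ hQn in
lemma SIG_top : SIG n J Q (n-1) = J-1 := if_pos rfl

lemma SIG_Jm : SIG n J Q (J-1) = n-1 := by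
  unfold SIG; rw [if_neg (by omega), if_pos rfl]

lemma SIG_zero : SIG n J Q 0 = Q := by
  unfold SIG; rw [if_neg (by omega), if_neg (by omega), if_pos rfl]

lemma SIG_Q : SIG n J Q Q = 0 := by
  unfold SIG; rw [if_neg (by omega), if_neg (by omega), if_neg (by omega), if_pos rfl]

lemma OFS_key {t : ℕ} (ht : t < n) :
    OFS n J Q (if t+1 = n then 0 else t+1) =
      (if SIG n J Q (OFS n J Q t) = n-1 then 0 else SIG n J Q (OFS n J Q t) + 1) := by
  have O0 : OFS n J Q 0 = 0 := if_pos rfl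
  have O1 : ∀ s, s ≠ 0 → s ≤ n-1-Q → OFS n J Q s = s+Q := by
    intro s h h'; unfold OFS; rw [if_neg h, if_pos h']
  have O2 : ∀ s, ¬ s ≤ n-1-Q → s ≤ n-J → OFS n J Q s = s+J+Q-n := by
    intro s h h'; unfold OFS; rw [if_neg (by omega), if_neg h, if_pos h']
  have O3 : ∀ s, ¬ s ≤ n-J → OFS n J Q s = s+J-n := by
    intro s h; unfold OFS; rw [if_neg (by omega), if_neg (by omega), if_neg h]
  rcases eq_or_ne t 0 with rfl | h0
  · rw [if_neg (by omega), O0, SIG_zero hJ2 hJQ hQn, if_neg (by omega),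
      O1 1 (by omega) (by omega)]
    omega
  rcases Nat.lt_or_ge t (n-1-Q) with h | h
  · rw [if_neg (by omega), O1 t h0 (by omega), O1 (t+1) (by omega) (by omega),
      SIG_fix (by omega) (by omega) (by omega) (by omega), if_neg (by omega)]
    omega
  rcases eq_or_ne t (n-1-Q) with rfl | h3
  · rw [if_neg (by omega), O1 _ h0 le_rfl]
    have e : n-1-Q+Q = n-1 := by omega
    rw [e, SIG_top, if_neg (by omega), O2 (n-1-Q+1) (by omega) (by omega)]
    omega
  rcases Nat.lt_or_ge t (n-J) with h4 | h4
  · rw [if_neg (by omega), O2 t (by omega) (by omega), O2 (t+1) (by omega) (by omega),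
      SIG_fix (by omega) (by omega) (by omega) (by omega), if_neg (by omega)]
    omega
  rcases eq_or_ne t (n-J) with rfl | h5
  · rw [if_neg (by omega), O2 _ (by omega) le_rfl]
    have e : n-J+J+Q-n = Q := by omega
    rw [e, SIG_Q hJ2 hJQ hQn, if_neg (by omega), O3 (n-J+1) (by omega)]
    omega
  rcases eq_or_ne t (n-1) with rfl | h6
  · rw [if_pos (by omega), O0, O3 _ (by omega)]
    have e : n-1+J-n = J-1 := by omega
    rw [e, SIG_Jm hJ2 hJQ hQn, if_pos rfl]
  · rw [if_neg (by omega), O3 t (by omega), O3 (t+1) (by omega),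
      SIG_fix (by omega) (by omega) (by omega) (by omega), if_neg (by omega)]
    omega

end NatLemmas

/-- mod of something < 2n -/
lemma mod2n {n a : ℕ} (hn : 0 < n) (h : a < 2*n) : a % n = if a < n then a else a - n := by
  split_ifs with hh
  · exact Nat.mod_eq_of_lt hh
  · rw [Nat.mod_eq_sub_mod (by omega), Nat.mod_eq_of_lt (by omega)]


-- mod2n' alias
lemma mod2n' {n a : ℕ} (hn : 0 < n) (h : a < 2*n) : a % n = if a < n then a else a - n := mod2n hn h
section EncDec
variable {n : ℕ} (hn : 0 < n) (b : ℕ)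

def enc (hn : 0 < n) (b o : ℕ) : Fin n := ⟨(b+o) % n, Nat.mod_lt _ hn⟩

def dec (b : ℕ) (x : Fin n) : ℕ := (x.val + n - b) % n

lemma csucc_cpred (k : Fin n) : csucc (cpred k) = k := by
  apply Fin.ext
  show ((k.val + n - 1) % n + 1) % n = k.val
  rw [Nat.mod_add_mod]
  have : k.val + n - 1 + 1 = k.val + n := by omega
  rw [this, Nat.add_mod_right, Nat.mod_eq_of_lt k.isLt]

lemma cpred_csucc (k : Fin n) : cpred (csucc k) = k := by
  apply Fin.ext
  show ((k.val + 1) % n + n - 1) % n = k.val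
  have hnn : 0 < n := k.pos
  have e0 : ∀ m : ℕ, m + n - 1 = m + (n - 1) := fun m => by omega
  have e := e0 ((k.val + 1) % n)
  rw [e, Nat.mod_add_mod]
  have e2 : k.val + 1 + (n - 1) = k.val + n := by omega
  rw [e2, Nat.add_mod_right, Nat.mod_eq_of_lt k.isLt]

lemma enc_val (o : ℕ) : (enc hn b o).val = (b + o) % n := rfl

lemma csucc_enc (o : ℕ) : csucc (enc hn b o) = enc hn b (o+1) := by
  apply Fin.ext
  show ((b+o) % n + 1) % n = (b+(o+1)) % n
  rw [Nat.mod_add_mod]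
  congr 1 <;> omega

lemma cpred_enc (o : ℕ) : cpred (enc hn b o) = enc hn b (o+(n-1)) := by
  apply Fin.ext
  show ((b+o) % n + n - 1) % n = (b+(o+(n-1))) % n
  have e0 : ∀ m : ℕ, m + n - 1 = m + (n - 1) := fun m => by omega
  have e := e0 ((b+o) % n)
  rw [e, Nat.mod_add_mod]
  congr 1 <;> omega

lemma enc_mod (o : ℕ) : enc hn b (o % n) = enc hn b o := by
  apply Fin.ext
  show (b + o % n) % n = (b + o) % n
  conv_lhs => rw [Nat.add_mod]
  rw [Nat.mod_mod_of_dvd _ dvd_rfl, ← Nat.add_mod]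

lemma enc_inj {o o' : ℕ} (hb : b < n) (ho : o < n) (ho' : o' < n)
    (h : enc hn b o = enc hn b o') : o = o' := by
  have hv : (b + o) % n = (b + o') % n := congrArg Fin.val h
  rw [mod2n' hn (by omega), mod2n' hn (by omega)] at hv
  split_ifs at hv <;> omega

lemma enc_dec (hb : b < n) (x : Fin n) : enc hn b (dec b x) = x := by
  apply Fin.ext
  show (b + (x.val + n - b) % n) % n = x.val
  rw [Nat.add_mod b, Nat.mod_mod_of_dvd _ dvd_rfl, ← Nat.add_mod]
  have : b + (x.val + n - b) = x.val + n := by omega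
  rw [this, Nat.add_mod_right, Nat.mod_eq_of_lt x.isLt]

lemma dec_enc (hb : b < n) {o : ℕ} (ho : o < n) : dec b (enc hn b o) = o := by
  show ((b + o) % n + n - b) % n = o
  rcases Nat.lt_or_ge (b+o) n with h | h
  · rw [Nat.mod_eq_of_lt h]
    have : b + o + n - b = o + n := by omega
    rw [this, Nat.add_mod_right, Nat.mod_eq_of_lt ho]
  · rw [mod2n' (a := b+o) hn (by omega), if_neg (by omega)]
    have : b + o - n + n - b = o := by omega
    rw [this, Nat.mod_eq_of_lt ho]

include hn in
lemma dec_lt (x : Fin n) : dec b x < n := Nat.mod_lt _ hn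

omit hn in
include hn in
lemma dec_conv {b₁ : ℕ} (hb₁ : b₁ < n) (x y : Fin n) :
    dec x.val y = (dec b₁ y + n - dec b₁ x) % n := by
  have ha : dec b₁ x < n := dec_lt hn b₁ x
  have hc : dec b₁ y < n := dec_lt hn b₁ y
  have hx : x = enc hn b₁ (dec b₁ x) := (enc_dec hn b₁ hb₁ x).symm
  have hy : y = enc hn b₁ (dec b₁ y) := (enc_dec hn b₁ hb₁ y).symm
  set a := dec b₁ x with hadef
  set c := dec b₁ y with hcdef
  rw [hx, hy]
  show ((enc hn b₁ c).val + n - (enc hn b₁ a).val) % n = (c + n - a) % n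
  rw [enc_val, enc_val]
  have e1 : (b₁ + a) % n = if b₁ + a < n then b₁ + a else b₁ + a - n := mod2n' hn (by omega)
  have e2 : (b₁ + c) % n = if b₁ + c < n then b₁ + c else b₁ + c - n := mod2n' hn (by omega)
  rw [e1, e2]
  split_ifs with h1 h2 h2 <;>
    rw [mod2n' hn (by omega), mod2n' hn (by omega)] <;> split_ifs <;> omega

end EncDec

/-- cardinality drops under a non-injective surjection -/
lemma card_lt_of_surj_not_inj {α β : Type*} [Finite α] (f : α → β)
    (hs : Function.Surjective f) {x y : α} (hxy : x ≠ y) (hf : f x = f y) :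
    Nat.card β < Nat.card α := by
  classical
  cases nonempty_fintype α
  have hs2 : Function.Surjective (fun z : {z : α // z ≠ x} => f z.1) := by
    intro c
    obtain ⟨a, rfl⟩ := hs c
    rcases eq_or_ne a x with rfl | h
    · exact ⟨⟨y, Ne.symm hxy⟩, hf.symm⟩
    · exact ⟨⟨a, h⟩, rfl⟩
  have h1 : Nat.card β ≤ Nat.card {z : α // z ≠ x} := Nat.card_le_card_of_surjective _ hs2
  have h2 : Nat.card {z : α // z ≠ x} < Nat.card α := by
    rw [Nat.card_eq_fintype_card, Nat.card_eq_fintype_card]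
    exact Fintype.card_subtype_lt (x := x) (by simp)
  omega

/-- a predicate constant along a relation is constant along its EqvGen -/
lemma eqvGen_const {α : Type*} {r : α → α → Prop} {P : α → Prop}
    (h : ∀ x y, r x y → (P x ↔ P y)) {a b : α} (hab : EqvGen r a b) : P a ↔ P b := by
  induction hab with
  | rel x y h' => exact h _ _ h'
  | refl x => exact Iff.rfl
  | symm x y _ ih => exact ih.symm
  | trans x y z _ _ ih1 ih2 => exact ih1.trans ih2

lemma eqvGen_guard {α : Type*} {r s : α → α → Prop} {P : α → Prop}
    (hP : ∀ x y, r x y → (P x ↔ P y))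
    (hrs : ∀ x y, r x y → P x → P y → s x y) {a b : α}
    (hab : EqvGen r a b) (ha : P a) : EqvGen s a b := by
  induction hab with
  | rel x y h' => exact EqvGen.rel _ _ (hrs _ _ h' ha ((hP _ _ h').mp ha))
  | refl x => exact EqvGen.refl x
  | symm x y hxy ih =>
      exact EqvGen.symm _ _ (ih ((eqvGen_const hP (EqvGen.symm _ _ hxy)).mp ha))
  | trans x y z hxy hyz ih1 ih2 =>
      exact EqvGen.trans _ _ _ (ih1 ha) (ih2 ((eqvGen_const hP hxy).mp ha))



/-- Handshake lemma for 2-regular "figure" structures: if every `e : E` carries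
exactly two slots, then the in- and out-edges at any slot `t₀` are joined by the
other slots. -/
lemma figure_handshake {T E : Type*} [Fintype T] [Fintype E] [DecidableEq E]
    (g h : T → E)
    (t₀ : T)
    (two : ∀ e : E,
      EqvGen (fun x y => ∃ t, t ≠ t₀ ∧ ((g t = x ∧ h t = y) ∨ (g t = y ∧ h t = x))) (g t₀) e →
      (univ.filter fun t => g t = e).card + (univ.filter fun t => h t = e).card = 2) :
    EqvGen (fun x y => ∃ t, t ≠ t₀ ∧ ((g t = x ∧ h t = y) ∨ (g t = y ∧ h t = x)))
      (g t₀) (h t₀) := by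
  classical
  by_contra hcon
  set r : E → E → Prop :=
    fun x y => ∃ t, t ≠ t₀ ∧ ((g t = x ∧ h t = y) ∨ (g t = y ∧ h t = x)) with hr
  set Z : Finset E := univ.filter (fun e => EqvGen r (g t₀) e) with hZ
  have hgZ : g t₀ ∈ Z := by simp [hZ, EqvGen.refl]
  have hhZ : h t₀ ∉ Z := by simpa [hZ] using hcon
  have hcl : ∀ t, t ≠ t₀ → (g t ∈ Z ↔ h t ∈ Z) := by
    intro t ht
    simp only [hZ, mem_filter, mem_univ, true_and]
    constructor
    · intro hg; exact EqvGen.trans _ _ _ hg (EqvGen.rel _ _ ⟨t, ht, Or.inl ⟨rfl, rfl⟩⟩)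
    · intro hh; exact EqvGen.trans _ _ _ hh (EqvGen.rel _ _ ⟨t, ht, Or.inr ⟨rfl, rfl⟩⟩)
  -- counting
  have lhsg : ∑ e ∈ Z, (univ.filter fun t => g t = e).card
      = (univ.filter fun t => g t ∈ Z).card := by
    rw [Finset.card_eq_sum_card_fiberwise (f := g) (s := univ.filter fun t => g t ∈ Z) (t := Z) (fun x hx => (mem_filter.mp hx).2)]
    apply Finset.sum_congr rfl
    intro e he
    congr 1
    ext t
    simp only [mem_filter, mem_univ, true_and]
    constructor
    · intro hh; exact ⟨hh ▸ he, hh⟩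
    · tauto
  have lhsh : ∑ e ∈ Z, (univ.filter fun t => h t = e).card
      = (univ.filter fun t => h t ∈ Z).card := by
    rw [Finset.card_eq_sum_card_fiberwise (f := h) (s := univ.filter fun t => h t ∈ Z) (t := Z) (fun x hx => (mem_filter.mp hx).2)]
    apply Finset.sum_congr rfl
    intro e he
    congr 1
    ext t
    simp only [mem_filter, mem_univ, true_and]
    constructor
    · intro hh; exact ⟨hh ▸ he, hh⟩
    · tauto
  have htot : (univ.filter fun t => g t ∈ Z).card + (univ.filter fun t => h t ∈ Z).card
      = 2 * Z.card := by
    rw [← lhsg, ← lhsh, ← Finset.sum_add_distrib]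
    rw [Finset.sum_congr rfl (fun e he => two e (by simpa [hZ] using (mem_filter.mp he).2)),
      Finset.sum_const, smul_eq_mul, mul_comm]
  have e1 : (univ.filter fun t => g t ∈ Z).card = ∑ t : T, (if g t ∈ Z then (1:ℕ) else 0) :=
    Finset.card_filter _ _
  have e2 : (univ.filter fun t => h t ∈ Z).card = ∑ t : T, (if h t ∈ Z then (1:ℕ) else 0) :=
    Finset.card_filter _ _
  set F : T → ℕ := fun t => (if g t ∈ Z then 1 else 0) + (if h t ∈ Z then 1 else 0) with hF
  have htot2 : ∑ t : T, F t = 2 * Z.card := by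
    rw [hF, Finset.sum_add_distrib, ← e1, ← e2]; exact htot
  have hsplit : ∑ t : T, F t = F t₀ + ∑ t ∈ univ.erase t₀, F t :=
    (Finset.add_sum_erase univ F (mem_univ t₀)).symm
  have hFt₀ : F t₀ = 1 := by simp [hF, hgZ, hhZ]
  have heven : 2 ∣ ∑ t ∈ univ.erase t₀, F t := by
    apply Finset.dvd_sum
    intro t ht
    have ht' : t ≠ t₀ := (Finset.mem_erase.mp ht).1
    rcases (hcl t ht') with hiff
    by_cases hg : g t ∈ Z
    · have : h t ∈ Z := hiff.mp hg
      simp [hF, hg, this]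
    · have : h t ∉ Z := fun hc => hg (hiff.mpr hc)
      simp [hF, hg, this]
  omega

lemma eqvGen_map {α β : Type*} {r : α → α → Prop} {s : β → β → Prop} (φ : α → β)
    (h : ∀ x y, r x y → s (φ x) (φ y)) {a b : α} (hab : EqvGen r a b) :
    EqvGen s (φ a) (φ b) := by
  induction hab with
  | rel x y h' => exact EqvGen.rel _ _ (h _ _ h')
  | refl x => exact EqvGen.refl _
  | symm x y _ ih => exact EqvGen.symm _ _ ih
  | trans x y z _ _ ih1 ih2 => exact EqvGen.trans _ _ _ ih1 ih2

lemma eqvGen_mem {α : Type*} {S : Set α} {r : α → α → Prop}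
    (hr : ∀ x y, r x y → x ∈ S ∧ y ∈ S) {a b : α} (h : EqvGen r a b) :
    a = b ∨ (a ∈ S ∧ b ∈ S) := by
  induction h with
  | rel x y h' => exact Or.inr (hr _ _ h')
  | refl x => exact Or.inl rfl
  | symm x y _ ih => tauto
  | trans x y z _ _ ih1 ih2 => rcases ih1 with rfl | h1 <;> rcases ih2 with rfl | h2 <;> tauto

lemma eqvGen_subtype {α : Type*} {S : Set α} {r : α → α → Prop}
    (hr : ∀ x y, r x y → x ∈ S ∧ y ∈ S) {R : S → S → Prop}
    (hR : ∀ (x y : α) (hx : x ∈ S) (hy : y ∈ S), r x y → R ⟨x, hx⟩ ⟨y, hy⟩)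
    {a b : α} (h : EqvGen r a b) :
    ∀ (ha : a ∈ S) (hb : b ∈ S), EqvGen R ⟨a, ha⟩ ⟨b, hb⟩ := by
  induction h with
  | rel x y hxy => exact fun hx hy => EqvGen.rel _ _ (hR _ _ hx hy hxy)
  | refl x => exact fun hx hy => EqvGen.refl _
  | symm x y hxy ih => exact fun hx hy => EqvGen.symm _ _ (ih hy hx)
  | trans x y z hxy hyz ih1 ih2 =>
      intro hx hz
      rcases eqvGen_mem hr hxy with rfl | ⟨-, hy⟩
      · exact ih2 hx hz
      · exact EqvGen.trans _ _ _ (ih1 hx hy) (ih2 hy hz)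

section WalkLemmas
variable {G : SimpleGraph V} (W : DoubleTrace G)

lemma DoubleTrace.step_count {u w : V} (h : G.Adj u w) :
    W.traversalCount u w + W.traversalCount w u = 2 := by
  have ht := W.twice s(u,w) (by rwa [SimpleGraph.mem_edgeSet])
  rw [DoubleTrace.traversalCount, DoubleTrace.traversalCount, ← ht]
  have hne : u ≠ w := h.ne
  have hdis : Disjoint
      (Finset.univ.filter fun k : Fin W.n => W.f k = u ∧ W.f (csucc k) = w)
      (Finset.univ.filter fun k : Fin W.n => W.f k = w ∧ W.f (csucc k) = u) := by
    rw [Finset.disjoint_left]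
    rintro k hk1 hk2
    simp only [Finset.mem_filter, Finset.mem_univ, true_and] at hk1 hk2
    exact hne (hk1.1.symm.trans hk2.1)
  rw [← Finset.card_union_of_disjoint hdis]
  congr 1
  ext k
  simp only [Finset.mem_union, Finset.mem_filter, Finset.mem_univ, true_and, Sym2.eq_iff]

lemma card_filter_subtype {α : Type*} [Fintype α] (q : α → Prop) [DecidablePred q]
    (p : α → Prop) [DecidablePred p] :
    (Finset.univ.filter fun t : {x // q x} => p t.1).card
      = (Finset.univ.filter fun k : α => q k ∧ p k).card := by
  apply Finset.card_bij (fun t _ => t.1)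
  · intro t ht
    simp only [Finset.mem_filter, Finset.mem_univ, true_and] at *
    exact ⟨t.2, ht⟩
  · intro a _ b _ hab
    exact Subtype.ext hab
  · intro k hk
    simp only [Finset.mem_filter, Finset.mem_univ, true_and] at hk
    exact ⟨⟨k, hk.1⟩, by simp only [Finset.mem_filter, Finset.mem_univ, true_and]; exact hk.2, rfl⟩

lemma DoubleTrace.inslot_count (hn : 0 < W.n) (v w : V) :
    (Finset.univ.filter fun k : Fin W.n => W.f k = v ∧ W.f (cpred k) = w).card
      = W.traversalCount w v := by
  rw [DoubleTrace.traversalCount]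
  apply Finset.card_bij (fun k _ => cpred k)
  · intro k hk
    simp only [Finset.mem_filter, Finset.mem_univ, true_and] at *
    refine ⟨hk.2, ?_⟩
    rw [csucc_cpred _]
    exact hk.1
  · intro a _ b _ hab
    have := congrArg csucc hab
    rwa [csucc_cpred a, csucc_cpred b] at this
  · intro k hk
    simp only [Finset.mem_filter, Finset.mem_univ, true_and] at hk
    refine ⟨csucc k, ?_, cpred_csucc k⟩
    simp only [Finset.mem_filter, Finset.mem_univ, true_and]
    refine ⟨hk.2, ?_⟩
    rw [cpred_csucc _]
    exact hk.1

lemma DoubleTrace.two_slots (hn : 0 < W.n) {v w : V} (hadj : G.Adj v w) :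
    (Finset.univ.filter fun k : Fin W.n => W.f k = v ∧ s(W.f (cpred k), v) = s(v,w)).card
    + (Finset.univ.filter fun k : Fin W.n => W.f k = v ∧ s(v, W.f (csucc k)) = s(v,w)).card
    = 2 := by
  have hvw : v ≠ w := hadj.ne
  have h1 : ∀ x : V, (s(x, v) = s(v, w)) ↔ x = w := by
    intro x
    rw [Sym2.eq_iff]
    constructor
    · rintro (⟨rfl, rfl⟩ | ⟨h, -⟩)
      · rfl
      · exact h
    · rintro rfl
      right; exact ⟨rfl, rfl⟩
  have h2 : ∀ x : V, (s(v, x) = s(v, w)) ↔ x = w := by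
    intro x
    rw [Sym2.eq_iff]
    constructor
    · rintro (⟨-, rfl⟩ | ⟨rfl, rfl⟩)
      · rfl
      · exact absurd rfl hvw
    · rintro rfl
      left; exact ⟨rfl, rfl⟩
  simp only [h1, h2]
  rw [W.inslot_count hn]
  have h3 : (Finset.univ.filter fun k : Fin W.n => W.f k = v ∧ W.f (csucc k) = w).card
      = W.traversalCount v w := rfl
  rw [h3]
  have := W.step_count hadj
  omega

end WalkLemmas

end Aux

section MainProof
open Relation

/-- If `W` is a parallel double trace of a finite connected graph and
some vertex figure of `W` is disconnected, then there is a parallel double trace `W'`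
whose vertex figures have strictly fewer connected components in total. -/
theorem parallel_doubleTrace_reduce_components {V : Type*} [Fintype V] [DecidableEq V]
    {G : SimpleGraph V} (hconn : G.Connected) (W : DoubleTrace G)
    (hpar : W.IsParallel) (hdisc : ∃ v : V, ¬ W.VertexFigureConnected v) :
    ∃ W' : DoubleTrace G, W'.IsParallel ∧
      ∑ v : V, W'.vertexFigureComponents v < ∑ v : V, W.vertexFigureComponents v := by
  classical
  obtain ⟨v, hv⟩ := hdisc
  rw [DoubleTrace.VertexFigureConnected] at hv
  push_neg at hv
  obtain ⟨e₁, e₂, hne12⟩ := hv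
  -- the walk is nonempty
  have hn : 0 < W.n := by
    by_contra hzero
    have h2 := W.twice e₁.1 e₁.2.1
    have hemp : (Finset.univ.filter fun k : Fin W.n => s(W.f k, W.f (csucc k)) = e₁.1) = ∅ := by
      apply Finset.eq_empty_of_forall_notMem
      intro k _
      exact absurd k.pos (by omega)
    rw [hemp] at h2
    simp at h2
  -- membership of slot edges
  have memin : ∀ k : Fin W.n, W.f k = v → s(W.f (cpred k), v) ∈ G.incidenceSet v := by
    intro k hk
    have hadj : G.Adj (W.f (cpred k)) v := by
      have := W.adj (cpred k)
      rwa [csucc_cpred, hk] at this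
    exact ⟨(SimpleGraph.mem_edgeSet _).mpr hadj, Sym2.mem_mk_right _ _⟩
  have memout : ∀ k : Fin W.n, W.f k = v → s(v, W.f (csucc k)) ∈ G.incidenceSet v := by
    intro k hk
    have hadj : G.Adj v (W.f (csucc k)) := by
      have := W.adj k
      rwa [hk] at this
    exact ⟨(SimpleGraph.mem_edgeSet _).mpr hadj, Sym2.mem_mk_left _ _⟩
  -- Sym2-level vertex-figure relation at v
  set rS : Sym2 V → Sym2 V → Prop := fun x y => ∃ k : Fin W.n, W.f k = v ∧
      ((x = s(W.f (cpred k), v) ∧ y = s(v, W.f (csucc k))) ∨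
       (y = s(W.f (cpred k), v) ∧ x = s(v, W.f (csucc k)))) with hrS
  have hrS_mem : ∀ x y, rS x y → x ∈ G.incidenceSet v ∧ y ∈ G.incidenceSet v := by
    rintro x y ⟨k, hk, (⟨rfl, rfl⟩ | ⟨rfl, rfl⟩)⟩
    exacts [⟨memin k hk, memout k hk⟩, ⟨memout k hk, memin k hk⟩]
  have h_up : ∀ (x y : Sym2 V) (hx : x ∈ G.incidenceSet v) (hy : y ∈ G.incidenceSet v),
      rS x y → W.VertexFigureRel v ⟨x, hx⟩ ⟨y, hy⟩ := by
    rintro x y hx hy ⟨k, hk, hpat⟩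
    exact ⟨k, hk, hpat⟩
  have hlift : ∀ {x y : Sym2 V}, EqvGen rS x y →
      ∀ (hx : x ∈ G.incidenceSet v) (hy : y ∈ G.incidenceSet v),
      EqvGen (W.VertexFigureRel v) ⟨x, hx⟩ ⟨y, hy⟩ :=
    fun h hx hy => eqvGen_subtype hrS_mem h_up h hx hy
  have hproj : ∀ {e e' : G.incidenceSet v}, EqvGen (W.VertexFigureRel v) e e' →
      EqvGen rS e.1 e'.1 := by
    intro e e' h
    refine eqvGen_map Subtype.val ?_ h
    rintro a b ⟨k, hk, hpat⟩
    exact ⟨k, hk, hpat⟩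
  have hne12S : ¬ EqvGen rS e₁.1 e₂.1 := fun h => hne12 (hlift h e₁.2 e₂.2)
  -- every incident edge is in the class of some in-slot
  have slot : ∀ e : Sym2 V, e ∈ G.incidenceSet v →
      ∃ k, W.f k = v ∧ EqvGen rS (s(W.f (cpred k), v)) e := by
    intro e he
    obtain ⟨hedge, hvmem⟩ := he
    obtain ⟨w, rfl⟩ := Sym2.mem_iff_exists.mp hvmem
    have hadj : G.Adj v w := (SimpleGraph.mem_edgeSet _).mp hedge
    have h2 := W.two_slots hn hadj
    by_cases hpos : 0 < (Finset.univ.filter fun k : Fin W.n =>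
        W.f k = v ∧ s(W.f (cpred k), v) = s(v,w)).card
    · obtain ⟨k, hk⟩ := Finset.card_pos.mp hpos
      simp only [Finset.mem_filter, Finset.mem_univ, true_and] at hk
      exact ⟨k, hk.1, hk.2 ▸ EqvGen.refl _⟩
    · have hpos2 : 0 < (Finset.univ.filter fun k : Fin W.n =>
          W.f k = v ∧ s(v, W.f (csucc k)) = s(v,w)).card := by omega
      obtain ⟨k, hk⟩ := Finset.card_pos.mp hpos2
      simp only [Finset.mem_filter, Finset.mem_univ, true_and] at hk
      refine ⟨k, hk.1, ?_⟩
      have hrel : rS (s(W.f (cpred k), v)) (s(v, W.f (csucc k))) := ⟨k, hk.1, Or.inl ⟨rfl, rfl⟩⟩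
      exact hk.2 ▸ EqvGen.rel _ _ hrel
  obtain ⟨k₁, hk₁v, hk₁e⟩ := slot e₁.1 e₁.2
  obtain ⟨k₂, hk₂v, hk₂e⟩ := slot e₂.1 e₂.2
  have hcls12 : ¬ EqvGen rS (s(W.f (cpred k₁), v)) (s(W.f (cpred k₂), v)) := by
    intro h
    exact hne12S (EqvGen.trans _ _ _ (EqvGen.symm _ _ hk₁e) (EqvGen.trans _ _ _ h hk₂e))
  -- select a pair of consecutive visits in distinct classes
  set dd : Fin W.n → ℕ := fun k => dec k₁.val k with hdd
  set S : Finset (Fin W.n) := Finset.univ.filter (fun k => W.f k = v ∧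
      ¬ EqvGen rS (s(W.f (cpred k₁), v)) (s(W.f (cpred k), v))) with hS
  have hk₂S : k₂ ∈ S := by
    simp only [hS, Finset.mem_filter, Finset.mem_univ, true_and]
    exact ⟨hk₂v, hcls12⟩
  obtain ⟨j, hjS, hjmin⟩ := Finset.exists_min_image S dd ⟨k₂, hk₂S⟩
  rw [hS] at hjS
  simp only [Finset.mem_filter, Finset.mem_univ, true_and] at hjS
  obtain ⟨hfj, hclsj⟩ := hjS
  set S2 : Finset (Fin W.n) := Finset.univ.filter (fun k => W.f k = v ∧ dd k < dd j) with hS2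
  have hdd_self : dd k₁ = 0 := by
    rw [hdd]
    show (k₁.val + W.n - k₁.val) % W.n = 0
    have e : k₁.val + W.n - k₁.val = W.n := by omega
    rw [e, Nat.mod_self]
  have hjk₁ : j ≠ k₁ := by
    intro h
    apply hclsj
    rw [h]
    exact EqvGen.refl _
  have hddj : dd j ≠ 0 := by
    intro h0
    apply hjk₁
    have e1 : enc hn k₁.val (dd j) = j := enc_dec hn k₁.val k₁.isLt j
    have e2 : enc hn k₁.val (dd k₁) = k₁ := enc_dec hn k₁.val k₁.isLt k₁
    rw [h0] at e1
    rw [hdd_self] at e2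
    rw [← e1]
    exact e2
  have hk₁S2 : k₁ ∈ S2 := by
    simp only [hS2, Finset.mem_filter, Finset.mem_univ, true_and]
    exact ⟨hk₁v, by omega⟩
  obtain ⟨i, hiS2, himax⟩ := Finset.exists_max_image S2 dd ⟨k₁, hk₁S2⟩
  rw [hS2] at hiS2
  simp only [Finset.mem_filter, Finset.mem_univ, true_and] at hiS2
  obtain ⟨hfi, hdi_lt⟩ := hiS2
  have hclsi : EqvGen rS (s(W.f (cpred k₁), v)) (s(W.f (cpred i), v)) := by
    by_contra hc
    have hiS : i ∈ S := by
      simp only [hS, Finset.mem_filter, Finset.mem_univ, true_and]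
      exact ⟨hfi, hc⟩
    have := hjmin i hiS
    omega
  have hclsij : ¬ EqvGen rS (s(W.f (cpred i), v)) (s(W.f (cpred j), v)) := by
    intro h
    exact hclsj (EqvGen.trans _ _ _ hclsi h)
  have hgap : ∀ k, W.f k = v → dd i < dd k → dd j ≤ dd k := by
    intro k hk hik
    by_contra hc
    push_neg at hc
    have hkS2 : k ∈ S2 := by
      simp only [hS2, Finset.mem_filter, Finset.mem_univ, true_and]
      exact ⟨hk, hc⟩
    have := himax k hkS2
    omega
  -- pass to coordinates based at i
  have hbi : i.val < W.n := i.isLt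
  set J := dec i.val j with hJdef
  have hJlt : J < W.n := dec_lt hn i.val j
  have hj_enc : j = enc hn i.val J := (enc_dec hn i.val hbi j).symm
  have hi_enc : i = enc hn i.val 0 := by
    apply Fin.ext
    rw [enc_val, Nat.add_zero]
    exact (Nat.mod_eq_of_lt hbi).symm
  have henc0 : enc hn i.val 0 = i := hi_enc.symm
  have henc1 : enc hn i.val 1 = csucc i := by
    have h := csucc_enc hn i.val 0
    rw [henc0] at h
    simpa using h.symm
  have hencn1 : enc hn i.val (W.n - 1) = cpred i := by
    have h := cpred_enc hn i.val 0
    rw [henc0] at h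
    simpa using h.symm
  set bb := W.f (csucc i) with hbb
  have hadjvb : G.Adj v bb := by
    have := W.adj i
    rwa [hfi] at this
  have hbv : bb ≠ v := hadjvb.ne'
  have hij : i ≠ j := by
    intro h
    exact hclsij (h ▸ EqvGen.refl _)
  have hJ0 : J ≠ 0 := by
    intro h0
    apply hij
    rw [hj_enc, h0, henc0]
  have hfcsucci : W.f (csucc i) = bb := rfl
  have hJ1 : J ≠ 1 := by
    intro h1
    have : j = csucc i := by
      rw [hj_enc, h1]
      exact henc1
    apply hbv
    rw [← hfcsucci, ← this, hfj]
  have hJ2 : 2 ≤ J := by omega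
  -- dec in i coordinates vs k₁ coordinates
  have hdec_inj : ∀ x y : Fin W.n, dd x = dd y → x = y := by
    intro x y hxy
    have e1 : enc hn k₁.val (dd x) = x := enc_dec hn k₁.val k₁.isLt x
    have e2 : enc hn k₁.val (dd y) = y := enc_dec hn k₁.val k₁.isLt y
    rw [← e1, ← e2, hxy]
  have hgap' : ∀ k, W.f k = v → k ≠ i → J ≤ dec i.val k := by
    intro k hk hki
    have hconv_k : dec i.val k = (dd k + W.n - dd i) % W.n := dec_conv hn k₁.isLt i k
    have hconv_j : dec i.val j = (dd j + W.n - dd i) % W.n := dec_conv hn k₁.isLt i j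
    have hak : dd k < W.n := dec_lt hn k₁.val k
    have haj : dd j < W.n := dec_lt hn k₁.val j
    have hai : dd i < W.n := dec_lt hn k₁.val i
    have hne_k : dd k ≠ dd i := fun h => hki (hdec_inj _ _ h)
    rw [hJdef, hconv_k, hconv_j]
    rcases Nat.lt_or_ge (dd i) (dd k) with h | h
    · have hjk := hgap k hk h
      rw [mod2n' hn (by omega), mod2n' hn (by omega)]
      split_ifs <;> omega
    · rw [mod2n' hn (by omega), mod2n' hn (by omega)]
      split_ifs <;> omega
  -- the second traversal of the edge v→bb
  have htc : W.traversalCount v bb = 2 := by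
    rcases hpar v bb hadjvb with h0 | h2
    · exfalso
      rw [DoubleTrace.traversalCount] at h0
      have himem : i ∈ (Finset.univ.filter fun k : Fin W.n =>
          W.f k = v ∧ W.f (csucc k) = bb) := by
        simp only [Finset.mem_filter, Finset.mem_univ, true_and]
        exact ⟨hfi, rfl⟩
      rw [Finset.card_eq_zero.mp h0] at himem
      simp at himem
    · exact h2
  obtain ⟨i₂, hi₂mem, hi₂ne⟩ : ∃ i₂, (W.f i₂ = v ∧ W.f (csucc i₂) = bb) ∧ i₂ ≠ i := by
    have hcard : (Finset.univ.filter fun k : Fin W.n =>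
        W.f k = v ∧ W.f (csucc k) = bb).card = 2 := htc
    have himem : i ∈ (Finset.univ.filter fun k : Fin W.n =>
        W.f k = v ∧ W.f (csucc k) = bb) := by
      simp only [Finset.mem_filter, Finset.mem_univ, true_and]
      exact ⟨hfi, rfl⟩
    have hpos : 0 < ((Finset.univ.filter fun k : Fin W.n =>
        W.f k = v ∧ W.f (csucc k) = bb).erase i).card := by
      rw [Finset.card_erase_of_mem himem, hcard]
      omega
    obtain ⟨y, hy⟩ := Finset.card_pos.mp hpos
    have hy' := Finset.mem_erase.mp hy
    have hy2 := hy'.2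
    simp only [Finset.mem_filter, Finset.mem_univ, true_and] at hy2
    exact ⟨y, hy2, hy'.1⟩
  set Q := dec i.val i₂ with hQdef
  have hQlt : Q < W.n := dec_lt hn i.val i₂
  have hi₂enc : i₂ = enc hn i.val Q := (enc_dec hn i.val hbi i₂).symm
  have hJQ : J ≤ Q := hgap' i₂ hi₂mem.1 hi₂ne
  have hQn : Q + 2 ≤ W.n := by
    rcases eq_or_ne Q (W.n - 1) with hQval | hQval
    · exfalso
      have hiq : i₂ = cpred i := by
        rw [hi₂enc, hQval]
        exact hencn1
      apply hbv
      rw [← hi₂mem.2, hiq, csucc_cpred, hfi]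
    · omega
  -- the splice permutation and re-ordering
  set σf : Fin W.n → Fin W.n :=
    fun x => enc hn i.val (SIG W.n J Q (dec i.val x)) with hσf
  set ord : Fin W.n → Fin W.n :=
    fun t => enc hn i.val (OFS W.n J Q t.val) with hord
  have hσ_enc : ∀ o, o < W.n → σf (enc hn i.val o) = enc hn i.val (SIG W.n J Q o) := by
    intro o ho
    rw [hσf]
    show enc hn i.val (SIG W.n J Q (dec i.val (enc hn i.val o))) = _
    rw [dec_enc hn i.val hbi ho]
  have h_enc_n : enc hn i.val W.n = enc hn i.val 0 := by
    apply Fin.ext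
    rw [enc_val, enc_val, Nat.add_zero, Nat.add_mod_right]
  have hconj : ∀ t, ord (csucc t) = csucc (σf (ord t)) := by
    intro t
    have h1 : (csucc t).val = if t.val+1 = W.n then 0 else t.val+1 := by
      show (t.val+1) % W.n = _
      rcases eq_or_ne (t.val+1) W.n with h | h
      · rw [h, Nat.mod_self, if_pos rfl]
      · rw [if_neg h, Nat.mod_eq_of_lt (by have := t.isLt; omega)]
    have h2 : ord (csucc t) = enc hn i.val (OFS W.n J Q
        (if t.val+1 = W.n then 0 else t.val+1)) := by
      rw [hord]
      show enc hn i.val (OFS W.n J Q (csucc t).val) = _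
      rw [h1]
    rw [h2, OFS_key hJ2 hJQ hQn t.isLt]
    have h3 : σf (ord t) = enc hn i.val (SIG W.n J Q (OFS W.n J Q t.val)) :=
      hσ_enc _ (OFS_lt hJ2 hJQ hQn t.isLt)
    rw [h3, csucc_enc]
    split_ifs with hcase
    · rw [hcase, show W.n-1+1 = W.n by omega, h_enc_n]
    · rfl
  have hord_inj : Function.Injective ord := by
    intro t t' h
    rw [hord] at h
    apply Fin.ext
    exact OFS_inj hJ2 hJQ hQn t.isLt t'.isLt
      (enc_inj hn i.val hbi (OFS_lt hJ2 hJQ hQn t.isLt) (OFS_lt hJ2 hJQ hQn t'.isLt) h)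
  have hord_surj : Function.Surjective ord := (Finite.injective_iff_bijective.mp hord_inj).2
  have hσσ : ∀ x, σf (σf x) = x := by
    intro x
    have hdx : dec i.val x < W.n := dec_lt hn i.val x
    have h1 : σf x = enc hn i.val (SIG W.n J Q (dec i.val x)) := by rw [hσf]
    rw [h1, hσ_enc _ (SIG_lt hJ2 hJQ hQn hdx), SIG_SIG hJ2 hJQ hQn hdx,
      enc_dec hn i.val hbi x]
  have hfcs : ∀ x, W.f (csucc (σf x)) = W.f (csucc x) := by
    intro x
    have hdx : dec i.val x < W.n := dec_lt hn i.val x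
    have hxenc : x = enc hn i.val (dec i.val x) := (enc_dec hn i.val hbi x).symm
    set o := dec i.val x with ho
    rw [hxenc, hσ_enc o hdx, csucc_enc, csucc_enc]
    by_cases c1 : o = W.n - 1
    · rw [c1, SIG_top, show J-1+1 = J by omega, show W.n-1+1 = W.n by omega, h_enc_n,
        ← hj_enc, ← hi_enc, hfj, hfi]
    by_cases c2 : o = J - 1
    · rw [c2, SIG_Jm hJ2 hJQ hQn, show J-1+1 = J by omega, show W.n-1+1 = W.n by omega,
        h_enc_n, ← hj_enc, ← hi_enc, hfj, hfi]
    by_cases c3 : o = 0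
    · rw [c3, SIG_zero hJ2 hJQ hQn]
      have ha : enc hn i.val (Q+1) = csucc i₂ := by rw [hi₂enc, csucc_enc]
      have hb2 : enc hn i.val (0+1) = csucc i := by simpa using henc1
      rw [ha, hb2, hi₂mem.2, ← hbb]
    by_cases c4 : o = Q
    · rw [c4, SIG_Q hJ2 hJQ hQn]
      have ha : enc hn i.val (Q+1) = csucc i₂ := by rw [hi₂enc, csucc_enc]
      have hb2 : enc hn i.val (0+1) = csucc i := by simpa using henc1
      rw [ha, hb2, hi₂mem.2, ← hbb]
    · rw [SIG_fix c1 c2 c3 c4]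
  have hcpred_ord : ∀ t, ord (cpred t) = σf (cpred (ord t)) := by
    intro t
    have h1 := hconj (cpred t)
    rw [csucc_cpred] at h1
    have h2 := congrArg cpred h1
    rw [cpred_csucc] at h2
    have h3 := congrArg σf h2
    rw [hσσ] at h3
    exact h3.symm
  -- the special values of σf on predecessors
  have hcpi : cpred i = enc hn i.val (W.n - 1) := hencn1.symm
  have hcpj : cpred j = enc hn i.val (J - 1) := by
    rw [hj_enc, cpred_enc, ← enc_mod hn i.val (J + (W.n-1))]
    congr 1
    rw [mod2n' hn (by omega)]
    split_ifs <;> omega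
  have hσcpi : σf (cpred i) = cpred j := by
    rw [hcpi, hσ_enc _ (by omega), SIG_top, hcpj]
  have hσcpj : σf (cpred j) = cpred i := by
    rw [hcpj, hσ_enc _ (by omega), SIG_Jm hJ2 hJQ hQn, hcpi]
  -- σf fixes the predecessor of any other visit to v, and moves the predecessor
  -- of any non-visit to a position with the same f-value
  have hσfix : ∀ x : Fin W.n, x ≠ i → x ≠ j → W.f x ≠ bb → σf (cpred x) = cpred x := by
    intro x hxi hxj hxb
    have hdx : dec i.val x < W.n := dec_lt hn i.val x
    have hxenc : x = enc hn i.val (dec i.val x) := (enc_dec hn i.val hbi x).symm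
    set o := dec i.val x with ho
    have ho0 : o ≠ 0 := fun h => hxi (by rw [hxenc, h]; exact henc0)
    have hoJ : o ≠ J := fun h => hxj (by rw [hxenc, h, ← hj_enc])
    have ho1 : o ≠ 1 := by
      intro h
      apply hxb
      have hxc : x = csucc i := by rw [hxenc, h]; exact henc1
      rw [hxc, ← hbb]
    have hoQ1 : o ≠ Q+1 := by
      intro h
      apply hxb
      have : x = csucc i₂ := by rw [hxenc, h, hi₂enc, csucc_enc]
      rw [this, hi₂mem.2]
    have hcpx : cpred x = enc hn i.val (o - 1) := by
      rw [hxenc, cpred_enc, ← enc_mod hn i.val (o + (W.n-1))]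
      congr 1
      rw [mod2n' hn (by omega)]
      split_ifs <;> omega
    rw [hcpx, hσ_enc _ (by omega), SIG_fix (by omega) (by omega) (by omega) (by omega)]
  have hσp : ∀ x : Fin W.n, W.f x ≠ v → W.f (σf (cpred x)) = W.f (cpred x) := by
    intro x hx
    by_cases hxb : W.f x = bb
    · -- x is an arrival at bb, i.e. x = csucc i or x = csucc i₂ up to σf-behaviour
      have hdx : dec i.val x < W.n := dec_lt hn i.val x
      have hxenc : x = enc hn i.val (dec i.val x) := (enc_dec hn i.val hbi x).symm
      set o := dec i.val x with ho
      have ho0 : o ≠ 0 := fun h => hx (by rw [hxenc, h, henc0, hfi])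
      have hoJ : o ≠ J := fun h => hx (by rw [hxenc, h, ← hj_enc, hfj])
      have hcpx : cpred x = enc hn i.val (o - 1) := by
        rw [hxenc, cpred_enc, ← enc_mod hn i.val (o + (W.n-1))]
        congr 1
        rw [mod2n' hn (by omega)]
        split_ifs <;> omega
      by_cases ho1 : o = 1
      · rw [hcpx, ho1]
        norm_num
        rw [hσ_enc _ (by omega), SIG_zero hJ2 hJQ hQn, ← hi₂enc, henc0, hi₂mem.1, hfi]
      by_cases hoQ1 : o = Q+1
      · rw [hcpx, hoQ1, show Q+1-1 = Q by omega, hσ_enc _ (by omega), SIG_Q hJ2 hJQ hQn,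
          ← hi₂enc, henc0, hi₂mem.1, hfi]
      · rw [hcpx, hσ_enc _ (by omega), SIG_fix (by omega) (by omega) (by omega) (by omega)]
    · have hxi : x ≠ i := fun h => hx (h ▸ hfi)
      have hxj : x ≠ j := fun h => hx (h ▸ hfj)
      rw [hσfix x hxi hxj hxb]
  have hσpv : ∀ x : Fin W.n, W.f x = v → x ≠ i → x ≠ j → σf (cpred x) = cpred x := by
    intro x hx hxi hxj
    exact hσfix x hxi hxj (by rw [hx]; exact fun h => hbv h.symm)
  -- construct the new double trace
  have hadj' : ∀ t : Fin W.n, G.Adj (W.f (ord t)) (W.f (ord (csucc t))) := by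
    intro t
    rw [hconj t, hfcs]
    exact W.adj (ord t)
  have htwice' : ∀ e ∈ G.edgeSet,
      (Finset.univ.filter fun t : Fin W.n =>
        s(W.f (ord t), W.f (ord (csucc t))) = e).card = 2 := by
    intro e he
    rw [← W.twice e he]
    apply Finset.card_bij (fun t _ => ord t)
    · intro t ht
      simp only [Finset.mem_filter, Finset.mem_univ, true_and] at *
      rw [hconj t, hfcs] at ht
      exact ht
    · intro a _ b _ hab
      exact hord_inj hab
    · intro k hk
      simp only [Finset.mem_filter, Finset.mem_univ, true_and] at hk
      obtain ⟨t, rfl⟩ := hord_surj k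
      refine ⟨t, ?_, rfl⟩
      simp only [Finset.mem_filter, Finset.mem_univ, true_and]
      rw [hconj t, hfcs]
      exact hk
  set W' : DoubleTrace G := ⟨W.n, fun t => W.f (ord t), hadj', htwice'⟩ with hW'
  have hf' : ∀ t : Fin W.n, W'.f t = W.f (ord t) := fun t => rfl
  have hfp' : ∀ t : Fin W.n, W'.f (cpred t) = W.f (σf (cpred (ord t))) := by
    intro t
    rw [hf' (cpred t), hcpred_ord]
  have hfs' : ∀ t : Fin W.n, W'.f (csucc t) = W.f (csucc (ord t)) := by
    intro t
    rw [hf' (csucc t), hconj, hfcs]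
  -- parallelism
  have hcount : ∀ u w : V, W'.traversalCount u w = W.traversalCount u w := by
    intro u w
    rw [DoubleTrace.traversalCount, DoubleTrace.traversalCount]
    apply Finset.card_bij (fun t _ => ord t)
    · intro t ht
      simp only [Finset.mem_filter, Finset.mem_univ, true_and] at *
      rw [hf' t, hf' (csucc t), hconj t, hfcs] at ht
      exact ht
    · intro a _ b _ hab
      exact hord_inj hab
    · intro k hk
      simp only [Finset.mem_filter, Finset.mem_univ, true_and] at hk
      obtain ⟨t, rfl⟩ := hord_surj k
      refine ⟨t, ?_, rfl⟩
      simp only [Finset.mem_filter, Finset.mem_univ, true_and]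
      rw [hf' t, hf' (csucc t), hconj t, hfcs]
      exact hk
  have hpar' : W'.IsParallel := by
    intro u w hadj
    rw [hcount]
    exact hpar u w hadj
  -- characterisation of the new vertex-figure relation
  have hRel2 : ∀ (w : V) (e e' : G.incidenceSet w),
      W'.VertexFigureRel w e e' ↔ (∃ x : Fin W.n, W.f x = w ∧
        ((e.1 = s(W.f (σf (cpred x)), w) ∧ e'.1 = s(w, W.f (csucc x))) ∨
         (e'.1 = s(W.f (σf (cpred x)), w) ∧ e.1 = s(w, W.f (csucc x))))) := by
    intro w e e'
    constructor
    · rintro ⟨t, ht, hpat⟩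
      refine ⟨ord t, ?_, ?_⟩
      · rw [← hf' t]
        exact ht
      · rw [← hfp' t, ← hfs' t]
        exact hpat
    · rintro ⟨x, hx, hpat⟩
      obtain ⟨t, rfl⟩ := hord_surj x
      refine ⟨t, ?_, ?_⟩
      · rw [hf' t]
        exact hx
      · rw [hfp' t, hfs' t]
        exact hpat
  -- vertex figures away from v are unchanged
  have hcomp_eq : ∀ w, w ≠ v →
      W'.vertexFigureComponents w = W.vertexFigureComponents w := by
    intro w hw
    rw [DoubleTrace.vertexFigureComponents, DoubleTrace.vertexFigureComponents]
    apply Nat.card_congr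
    apply Quot.congrRight
    intro e e'
    rw [hRel2]
    constructor
    · rintro ⟨x, hx, hpat⟩
      refine ⟨x, hx, ?_⟩
      rwa [hσp x (by rw [hx]; exact hw)] at hpat
    · rintro ⟨x, hx, hpat⟩
      refine ⟨x, hx, ?_⟩
      rwa [hσp x (by rw [hx]; exact hw)]
  -- strict decrease at v
  have hstrict : W'.vertexFigureComponents v < W.vertexFigureComponents v := by
    set RV2 : G.incidenceSet v → G.incidenceSet v → Prop := fun e e' =>
      ∃ x : Fin W.n, W.f x = v ∧
        ((e.1 = s(W.f (σf (cpred x)), v) ∧ e'.1 = s(v, W.f (csucc x))) ∨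
         (e'.1 = s(W.f (σf (cpred x)), v) ∧ e.1 = s(v, W.f (csucc x)))) with hRV2
    have hcard1 : W'.vertexFigureComponents v = Nat.card (Quot RV2) := by
      rw [DoubleTrace.vertexFigureComponents]
      exact Nat.card_congr (Quot.congrRight (fun e e' => hRel2 v e e'))
    rw [hcard1, DoubleTrace.vertexFigureComponents]
    have hmea : s(W.f (cpred i), v) ∈ G.incidenceSet v := memin i hfi
    have hmeb : s(v, W.f (csucc i)) ∈ G.incidenceSet v := memout i hfi
    have hmec : s(W.f (cpred j), v) ∈ G.incidenceSet v := memin j hfj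
    have hmed : s(v, W.f (csucc j)) ∈ G.incidenceSet v := memout j hfj
    -- handshake at a visit, transported to index-level relations
    have hhs : ∀ (t₀ : Fin W.n) (ht₀ : W.f t₀ = v),
        EqvGen (fun x y : Sym2 V => ∃ k, k ≠ t₀ ∧ W.f k = v ∧
          ((s(W.f (cpred k), v) = x ∧ s(v, W.f (csucc k)) = y) ∨
           (s(W.f (cpred k), v) = y ∧ s(v, W.f (csucc k)) = x)))
          (s(W.f (cpred t₀), v)) (s(v, W.f (csucc t₀))) := by
      intro t₀ ht₀
      have h := figure_handshake (T := {k : Fin W.n // W.f k = v}) (E := Sym2 V)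
        (fun t => s(W.f (cpred t.1), v)) (fun t => s(v, W.f (csucc t.1))) ⟨t₀, ht₀⟩ ?two
      case two =>
        intro e hchain
        have hememb : e ∈ G.incidenceSet v := by
          have hpairs : ∀ x y : Sym2 V, (∃ t : {k : Fin W.n // W.f k = v},
              t ≠ (⟨t₀, ht₀⟩ : {k : Fin W.n // W.f k = v}) ∧
              ((s(W.f (cpred t.1), v) = x ∧ s(v, W.f (csucc t.1)) = y) ∨
               (s(W.f (cpred t.1), v) = y ∧ s(v, W.f (csucc t.1)) = x))) →
              x ∈ G.incidenceSet v ∧ y ∈ G.incidenceSet v := by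
            rintro x y ⟨t, -, (⟨hx, hy⟩ | ⟨hy, hx⟩)⟩
            · exact ⟨hx ▸ memin t.1 t.2, hy ▸ memout t.1 t.2⟩
            · exact ⟨hx ▸ memout t.1 t.2, hy ▸ memin t.1 t.2⟩
          rcases eqvGen_mem (S := G.incidenceSet v) hpairs hchain with heq | hmem2
          · rw [← heq]
            exact memin t₀ ht₀
          · exact hmem2.2
        obtain ⟨hedge, hvm⟩ := hememb
        obtain ⟨w, rfl⟩ := Sym2.mem_iff_exists.mp hvm
        have hadjvw : G.Adj v w := (SimpleGraph.mem_edgeSet _).mp hedge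
        rw [card_filter_subtype (fun k => W.f k = v) (fun k => s(W.f (cpred k), v) = s(v,w)),
            card_filter_subtype (fun k => W.f k = v) (fun k => s(v, W.f (csucc k)) = s(v,w))]
        exact W.two_slots hn hadjvw
      refine Relation.EqvGen.mono ?_ _ _ h
      rintro x y ⟨t, htne, hpat⟩
      exact ⟨t.1, fun he => htne (Subtype.ext he), t.2, hpat⟩
    -- visits other than i and j directly give RV2 pairs
    have hpair_other : ∀ k, W.f k = v → k ≠ i → k ≠ j →
        ∀ (x y : Sym2 V) (hx : x ∈ G.incidenceSet v) (hy : y ∈ G.incidenceSet v),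
        ((s(W.f (cpred k), v) = x ∧ s(v, W.f (csucc k)) = y) ∨
         (s(W.f (cpred k), v) = y ∧ s(v, W.f (csucc k)) = x)) →
        RV2 ⟨x, hx⟩ ⟨y, hy⟩ := by
      intro k hk hki hkj x y hx hy hpat
      refine ⟨k, hk, ?_⟩
      rw [hσpv k hk hki hkj]
      rcases hpat with ⟨h1, h2⟩ | ⟨h1, h2⟩
      · exact Or.inl ⟨h1.symm, h2.symm⟩
      · exact Or.inr ⟨h1.symm, h2.symm⟩
    have hmempat : ∀ k, W.f k = v → ∀ x y : Sym2 V,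
        ((s(W.f (cpred k), v) = x ∧ s(v, W.f (csucc k)) = y) ∨
         (s(W.f (cpred k), v) = y ∧ s(v, W.f (csucc k)) = x)) →
        x ∈ G.incidenceSet v ∧ y ∈ G.incidenceSet v := by
      rintro k hk x y (⟨hx, hy⟩ | ⟨hy, hx⟩)
      · exact ⟨hx ▸ memin k hk, hy ▸ memout k hk⟩
      · exact ⟨hx ▸ memout k hk, hy ▸ memin k hk⟩
    have hrs_of_pat : ∀ k, W.f k = v → ∀ x y : Sym2 V,
        ((s(W.f (cpred k), v) = x ∧ s(v, W.f (csucc k)) = y) ∨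
         (s(W.f (cpred k), v) = y ∧ s(v, W.f (csucc k)) = x)) → rS x y := by
      rintro k hk x y (⟨hx, hy⟩ | ⟨hy, hx⟩)
      · exact ⟨k, hk, Or.inl ⟨hx.symm, hy.symm⟩⟩
      · exact ⟨k, hk, Or.inr ⟨hy.symm, hx.symm⟩⟩
    -- the two recombination chains
    have R1a : EqvGen RV2 (⟨_, hmea⟩ : G.incidenceSet v) ⟨_, hmeb⟩ := by
      have hh := hhs i hfi
      have hg := eqvGen_guard
        (r := fun x y : Sym2 V => ∃ k, k ≠ i ∧ W.f k = v ∧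
          ((s(W.f (cpred k), v) = x ∧ s(v, W.f (csucc k)) = y) ∨
           (s(W.f (cpred k), v) = y ∧ s(v, W.f (csucc k)) = x)))
        (s := fun x y : Sym2 V => ∃ k, k ≠ i ∧ k ≠ j ∧ W.f k = v ∧
          ((s(W.f (cpred k), v) = x ∧ s(v, W.f (csucc k)) = y) ∨
           (s(W.f (cpred k), v) = y ∧ s(v, W.f (csucc k)) = x)))
        (P := fun x => EqvGen rS (s(W.f (cpred i), v)) x) ?hP ?hrs hh (EqvGen.refl _)
      case hP =>
        rintro x y ⟨k, hki, hk, hpat⟩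
        have hr : rS x y := hrs_of_pat k hk x y hpat
        constructor
        · intro hPx
          exact EqvGen.trans _ _ _ hPx (EqvGen.rel _ _ hr)
        · intro hPy
          exact EqvGen.trans _ _ _ hPy (EqvGen.symm _ _ (EqvGen.rel _ _ hr))
      case hrs =>
        rintro x y ⟨k, hki, hk, hpat⟩ hPx hPy
        by_cases hkj : k = j
        · exfalso
          subst hkj
          rcases hpat with ⟨h1, h2⟩ | ⟨h1, h2⟩
          · exact hclsij (by rwa [← h1] at hPx)
          · exact hclsij (by rwa [← h1] at hPy)
        · exact ⟨k, hki, hkj, hk, hpat⟩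
      refine eqvGen_subtype (S := G.incidenceSet v) ?_ ?_ hg hmea hmeb
      · rintro x y ⟨k, -, -, hk, hpat⟩
        exact hmempat k hk x y hpat
      · rintro x y hx hy ⟨k, hki, hkj, hk, hpat⟩
        exact hpair_other k hk hki hkj x y hx hy hpat
    have R1b : EqvGen RV2 (⟨_, hmec⟩ : G.incidenceSet v) ⟨_, hmed⟩ := by
      have hh := hhs j hfj
      have hg := eqvGen_guard
        (r := fun x y : Sym2 V => ∃ k, k ≠ j ∧ W.f k = v ∧
          ((s(W.f (cpred k), v) = x ∧ s(v, W.f (csucc k)) = y) ∨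
           (s(W.f (cpred k), v) = y ∧ s(v, W.f (csucc k)) = x)))
        (s := fun x y : Sym2 V => ∃ k, k ≠ i ∧ k ≠ j ∧ W.f k = v ∧
          ((s(W.f (cpred k), v) = x ∧ s(v, W.f (csucc k)) = y) ∨
           (s(W.f (cpred k), v) = y ∧ s(v, W.f (csucc k)) = x)))
        (P := fun x => EqvGen rS (s(W.f (cpred j), v)) x) ?hP ?hrs hh (EqvGen.refl _)
      case hP =>
        rintro x y ⟨k, hkj, hk, hpat⟩
        have hr : rS x y := hrs_of_pat k hk x y hpat
        constructor
        · intro hPx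
          exact EqvGen.trans _ _ _ hPx (EqvGen.rel _ _ hr)
        · intro hPy
          exact EqvGen.trans _ _ _ hPy (EqvGen.symm _ _ (EqvGen.rel _ _ hr))
      case hrs =>
        rintro x y ⟨k, hkj, hk, hpat⟩ hPx hPy
        by_cases hki : k = i
        · exfalso
          subst hki
          rcases hpat with ⟨h1, h2⟩ | ⟨h1, h2⟩
          · exact hclsij (EqvGen.symm _ _ (by rwa [← h1] at hPx))
          · exact hclsij (EqvGen.symm _ _ (by rwa [← h1] at hPy))
        · exact ⟨k, hki, hkj, hk, hpat⟩
      refine eqvGen_subtype (S := G.incidenceSet v) ?_ ?_ hg hmec hmed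
      · rintro x y ⟨k, -, -, hk, hpat⟩
        exact hmempat k hk x y hpat
      · rintro x y hx hy ⟨k, hki, hkj, hk, hpat⟩
        exact hpair_other k hk hki hkj x y hx hy hpat
    -- soundness of the identity on edges as a map of quotients
    have hsound : ∀ (e e' : G.incidenceSet v), W.VertexFigureRel v e e' → EqvGen RV2 e e' := by
      rintro e e' ⟨k, hk, hpat⟩
      by_cases hki : k = i
      · subst hki
        rcases hpat with ⟨h1, h2⟩ | ⟨h1, h2⟩
        · have he : e = ⟨_, hmea⟩ := Subtype.ext h1
          have he' : e' = ⟨_, hmeb⟩ := Subtype.ext h2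
          rw [he, he']
          exact R1a
        · have he : e' = ⟨_, hmea⟩ := Subtype.ext h1
          have he2 : e = ⟨_, hmeb⟩ := Subtype.ext h2
          rw [he, he2]
          exact EqvGen.symm _ _ R1a
      by_cases hkj : k = j
      · subst hkj
        rcases hpat with ⟨h1, h2⟩ | ⟨h1, h2⟩
        · have he : e = ⟨_, hmec⟩ := Subtype.ext h1
          have he' : e' = ⟨_, hmed⟩ := Subtype.ext h2
          rw [he, he']
          exact R1b
        · have he : e' = ⟨_, hmec⟩ := Subtype.ext h1
          have he2 : e = ⟨_, hmed⟩ := Subtype.ext h2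
          rw [he, he2]
          exact EqvGen.symm _ _ R1b
      · refine EqvGen.rel _ _ ?_
        refine ⟨k, hk, ?_⟩
        rw [hσpv k hk hki hkj]
        exact hpat
    set ψ : Quot (W.VertexFigureRel v) → Quot RV2 := Quot.lift (Quot.mk RV2)
      (fun e e' h => Quot.eqvGen_sound (hsound e e' h)) with hψ
    have hψsurj : Function.Surjective ψ := by
      intro q
      induction q using Quot.ind with
      | _ e => exact ⟨Quot.mk _ e, rfl⟩
    have hbd2 : EqvGen RV2 (⟨_, hmeb⟩ : G.incidenceSet v) ⟨_, hmed⟩ := by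
      have h1 : RV2 ⟨_, hmec⟩ ⟨_, hmeb⟩ := ⟨i, hfi, Or.inl ⟨by rw [hσcpi], rfl⟩⟩
      exact EqvGen.trans _ _ _ (EqvGen.symm _ _ (EqvGen.rel _ _ h1)) R1b
    have hbd1 : ¬ EqvGen (W.VertexFigureRel v) (⟨_, hmeb⟩ : G.incidenceSet v) ⟨_, hmed⟩ := by
      intro h
      have hS := hproj h
      apply hclsij
      have hab : rS (s(W.f (cpred i), v)) (s(v, W.f (csucc i))) := ⟨i, hfi, Or.inl ⟨rfl, rfl⟩⟩
      have hcd : rS (s(W.f (cpred j), v)) (s(v, W.f (csucc j))) := ⟨j, hfj, Or.inl ⟨rfl, rfl⟩⟩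
      exact EqvGen.trans _ _ _ (EqvGen.rel _ _ hab)
        (EqvGen.trans _ _ _ hS (EqvGen.symm _ _ (EqvGen.rel _ _ hcd)))
    have hne_mk : Quot.mk (W.VertexFigureRel v) (⟨_, hmeb⟩ : G.incidenceSet v)
        ≠ Quot.mk (W.VertexFigureRel v) ⟨_, hmed⟩ := fun h => hbd1 (Quot.eq.mp h)
    have hψeq : ψ (Quot.mk (W.VertexFigureRel v) ⟨_, hmeb⟩)
        = ψ (Quot.mk (W.VertexFigureRel v) ⟨_, hmed⟩) := by
      show Quot.mk RV2 _ = Quot.mk RV2 _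
      exact Quot.eqvGen_sound hbd2
    exact card_lt_of_surj_not_inj ψ hψsurj hne_mk hψeq
  refine ⟨W', hpar', ?_⟩
  apply Finset.sum_lt_sum
  · intro w _
    rcases eq_or_ne w v with rfl | hw
    · exact le_of_lt hstrict
    · exact le_of_eq (hcomp_eq w hw)
  · exact ⟨v, Finset.mem_univ v, hstrict⟩

end MainProof

end StrongTraces
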